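/- Let p = 2N+1 be a prime with p ≡ 1 (mod 4) and let J be the N×N matrix J_{k,x} = (2/√p)sin(2πkx/p). Then no vector v ∈ {-1,1}^N satisfies Jv = v or Jv = -v. Consequently the minimum of the quadratic form -(1/2)⟨σ, Jσ⟩ over spin configurations σ ∈ {-1,1}^N is strictly greater than -N/2. -/

import Mathlib

open Complex Finset

noncomputable def zeta (p : ℕ) : ℂ := Complex.exp (2 * Real.pi * Complex.I / p)

lemma zeta_zpow (p : ℕ) (m : ℤ) :
    zeta p ^ m = Complex.exp (((2 * Real.pi * m / p : ℝ) : ℂ) * Complex.I) := by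
  rw [zeta, ← Complex.exp_int_mul]
  congr 1
  push_cast
  ring

lemma sin_zeta (p : ℕ) (m : ℤ) :
    ((Real.sin (2 * Real.pi * m / p) : ℝ) : ℂ) =
      (zeta p ^ m - zeta p ^ (-m)) / (2 * Complex.I) := by
  rw [zeta_zpow, zeta_zpow]
  have h : ∀ θ : ℝ, Complex.exp ((θ:ℂ) * Complex.I) = Real.cos θ + Real.sin θ * Complex.I := by
    intro θ
    rw [Complex.exp_mul_I]
    rw [Complex.ofReal_cos, Complex.ofReal_sin]
  have hm : ((2 * Real.pi * (-m : ℤ) / p : ℝ) : ℂ) = ((-(2 * Real.pi * m / p) : ℝ) : ℂ) := by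
    push_cast; ring
  rw [hm, h, h]
  rw [Real.cos_neg, Real.sin_neg]
  push_cast
  field_simp
  ring

lemma zeta_prim (p : ℕ) (hp : p ≠ 0) : IsPrimitiveRoot (zeta p) p :=
  Complex.isPrimitiveRoot_exp p hp

lemma sum_zeta (p : ℕ) (hp : p ≠ 0) (m : ℤ) :
    ∑ x ∈ Finset.range p, (zeta p ^ m) ^ x = if (p : ℤ) ∣ m then (p : ℂ) else 0 := by
  by_cases h : (p : ℤ) ∣ m
  · rw [if_pos h, ((zeta_prim p hp).zpow_eq_one_iff_dvd m).mpr h]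
    simp
  · rw [if_neg h]
    have hne : zeta p ^ m ≠ 1 := fun hc => h (((zeta_prim p hp).zpow_eq_one_iff_dvd m).mp hc)
    rw [geom_sum_eq hne]
    have : (zeta p ^ m) ^ p = 1 := by
      rw [← zpow_natCast, ← zpow_mul, mul_comm, zpow_mul, zpow_natCast,
        (zeta_prim p hp).pow_eq_one, one_zpow]
    rw [this, sub_self, zero_div]

lemma zeta_ne_zero (p : ℕ) : zeta p ≠ 0 := Complex.exp_ne_zero _

lemma full_sum (p : ℕ) (hp : p ≠ 0) (a b : ℤ) (hab : ¬ (p:ℤ) ∣ (a+b)) :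
    ∑ x ∈ Finset.range p,
        Real.sin (2*Real.pi*((a * x : ℤ) : ℝ)/p) * Real.sin (2*Real.pi*((b * x : ℤ) : ℝ)/p)
      = if (p:ℤ) ∣ (a - b) then (p:ℝ)/2 else 0 := by
  have hζ := zeta_ne_zero p
  have hterm : ∀ x : ℕ,
      ((Real.sin (2*Real.pi*((a * x : ℤ) : ℝ)/p) * Real.sin (2*Real.pi*((b * x : ℤ) : ℝ)/p) : ℝ) : ℂ)
      = -(1/4 : ℂ) * ((zeta p ^ (a+b))^x - (zeta p ^ (a-b))^x - (zeta p ^ (b-a))^x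
          + (zeta p ^ (-(a+b)))^x) := by
    intro x
    have h1 := sin_zeta p (a * x)
    have h2 := sin_zeta p (b * x)
    rw [Complex.ofReal_mul, h1, h2]
    have e : ∀ m : ℤ, zeta p ^ (m * (x:ℤ)) = (zeta p ^ m) ^ x := by
      intro m; rw [zpow_mul, zpow_natCast]
    have e1 : zeta p ^ (-(a * (x:ℤ))) = ((zeta p ^ a) ^ x)⁻¹ := by
      rw [← neg_mul, e, zpow_neg, inv_pow]
    have e2 : zeta p ^ (-(b * (x:ℤ))) = ((zeta p ^ b) ^ x)⁻¹ := by
      rw [← neg_mul, e, zpow_neg, inv_pow]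
    rw [e1, e2, e a, e b]
    have f1 : zeta p ^ (a + b) = zeta p ^ a * zeta p ^ b := zpow_add₀ hζ a b
    have f2 : zeta p ^ (a - b) = zeta p ^ a * (zeta p ^ b)⁻¹ := by
      rw [zpow_sub₀ hζ, div_eq_mul_inv]
    have f3 : zeta p ^ (b - a) = zeta p ^ b * (zeta p ^ a)⁻¹ := by
      rw [zpow_sub₀ hζ, div_eq_mul_inv]
    have f4 : zeta p ^ (-(a + b)) = (zeta p ^ a * zeta p ^ b)⁻¹ := by
      rw [zpow_neg, f1]
    have hA : (zeta p ^ a) ^ x ≠ 0 := pow_ne_zero _ (zpow_ne_zero _ hζ)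
    have hB : (zeta p ^ b) ^ x ≠ 0 := pow_ne_zero _ (zpow_ne_zero _ hζ)
    have g1 : (zeta p ^ (a+b))^x = (zeta p ^ a) ^ x * (zeta p ^ b) ^ x := by
      rw [f1, mul_pow]
    have g2 : (zeta p ^ (a-b))^x = (zeta p ^ a) ^ x * ((zeta p ^ b) ^ x)⁻¹ := by
      rw [f2, mul_pow, inv_pow]
    have g3 : (zeta p ^ (b-a))^x = (zeta p ^ b) ^ x * ((zeta p ^ a) ^ x)⁻¹ := by
      rw [f3, mul_pow, inv_pow]
    have g4 : (zeta p ^ (-(a+b)))^x = ((zeta p ^ a) ^ x)⁻¹ * ((zeta p ^ b) ^ x)⁻¹ := by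
      rw [f4, mul_inv, mul_pow, inv_pow, inv_pow]
    rw [g1, g2, g3, g4]
    generalize (zeta p ^ a) ^ x = A at hA ⊢
    generalize (zeta p ^ b) ^ x = B at hB ⊢
    field_simp
    ring_nf
    rw [Complex.I_sq]
    ring
  have hsum : ((∑ x ∈ Finset.range p,
        Real.sin (2*Real.pi*((a * x : ℤ) : ℝ)/p) * Real.sin (2*Real.pi*((b * x : ℤ) : ℝ)/p) : ℝ) : ℂ)
      = -(1/4 : ℂ) * ((if (p:ℤ) ∣ (a+b) then (p:ℂ) else 0) - (if (p:ℤ) ∣ (a-b) then (p:ℂ) else 0)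
          - (if (p:ℤ) ∣ (b-a) then (p:ℂ) else 0) + (if (p:ℤ) ∣ (-(a+b)) then (p:ℂ) else 0)) := by
    rw [Complex.ofReal_sum]
    rw [Finset.sum_congr rfl (fun x _ => hterm x)]
    rw [← Finset.mul_sum]
    congr 1
    rw [Finset.sum_add_distrib, Finset.sum_sub_distrib, Finset.sum_sub_distrib,
      sum_zeta p hp, sum_zeta p hp, sum_zeta p hp, sum_zeta p hp]
  have hab' : ¬ (p:ℤ) ∣ (-(a+b)) := by rwa [dvd_neg]
  have hba : ((p:ℤ) ∣ (b - a)) ↔ ((p:ℤ) ∣ (a - b)) := by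
    constructor
    · intro h; rw [show a - b = -(b-a) by ring]; exact dvd_neg.mpr h
    · intro h; rw [show b - a = -(a-b) by ring]; exact dvd_neg.mpr h
  by_cases hd : (p:ℤ) ∣ (a - b)
  · rw [if_pos hd]
    rw [if_neg hab, if_pos hd, if_pos (hba.mpr hd), if_neg hab'] at hsum
    have : ((∑ x ∈ Finset.range p,
        Real.sin (2*Real.pi*((a * x : ℤ) : ℝ)/p) * Real.sin (2*Real.pi*((b * x : ℤ) : ℝ)/p) : ℝ) : ℂ)
        = (((p:ℝ)/2 : ℝ) : ℂ) := by rw [hsum]; push_cast; ring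
    exact_mod_cast this
  · rw [if_neg hd]
    rw [if_neg hab, if_neg hd, if_neg (fun h => hd (hba.mp h)), if_neg hab'] at hsum
    have : ((∑ x ∈ Finset.range p,
        Real.sin (2*Real.pi*((a * x : ℤ) : ℝ)/p) * Real.sin (2*Real.pi*((b * x : ℤ) : ℝ)/p) : ℝ) : ℂ)
        = ((0 : ℝ) : ℂ) := by rw [hsum]; norm_num
    exact_mod_cast this

lemma sin_reflect (p : ℕ) (hp : p ≠ 0) (c : ℤ) (m : ℕ) (hm : m ≤ p) :
    Real.sin (2*Real.pi*((c * ((p - m : ℕ) : ℤ) : ℤ) : ℝ)/p)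
      = - Real.sin (2*Real.pi*((c * m : ℤ) : ℝ)/p) := by
  have hζ := zeta_ne_zero p
  have hcast : (c * ((p - m : ℕ) : ℤ) : ℤ) = c * p - c * m := by
    push_cast [Nat.cast_sub hm]; ring
  have hcp : zeta p ^ (c * (p:ℤ)) = 1 := by
    rw [mul_comm, zpow_mul, zpow_natCast, (zeta_prim p hp).pow_eq_one, one_zpow]
  have h1 : zeta p ^ (c * (p:ℤ) - c * m) = zeta p ^ (-(c * m)) := by
    rw [zpow_sub₀ hζ, hcp, zpow_neg]
    simp
  have h2 : zeta p ^ (-(c * (p:ℤ) - c * m)) = zeta p ^ (c * (m:ℤ)) := by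
    rw [show -(c * (p:ℤ) - c * m) = c * m - c * p by ring, zpow_sub₀ hζ, hcp]
    simp
  have := sin_zeta p (c * ((p - m : ℕ) : ℤ))
  rw [hcast, h1, h2] at this
  have h3 := sin_zeta p (c * (m:ℤ))
  have : ((Real.sin (2*Real.pi*((c * ((p - m : ℕ) : ℤ) : ℤ) : ℝ)/p) : ℝ) : ℂ)
      = ((- Real.sin (2*Real.pi*((c * m : ℤ) : ℝ)/p) : ℝ) : ℂ) := by
    rw [Complex.ofReal_neg, h3]
    rw [show ((Real.sin (2*Real.pi*((c * ((p - m : ℕ) : ℤ) : ℤ) : ℝ)/p) : ℝ) : ℂ)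
      = (zeta p ^ (-(c * (m:ℤ))) - zeta p ^ (c * (m:ℤ))) / (2 * Complex.I) from by
        rw [← h1, ← h2, ← hcast]; exact sin_zeta p _]
    ring
  exact_mod_cast this

lemma orth (N p : ℕ) (hN : 1 ≤ N) (hpN : p = 2*N+1) (k l : Fin N) :
    ∑ x : Fin N,
      Real.sin (2 * Real.pi * (((k:ℕ):ℝ)+1) * (((x:ℕ):ℝ)+1) / p) *
      Real.sin (2 * Real.pi * (((l:ℕ):ℝ)+1) * (((x:ℕ):ℝ)+1) / p)
      = if k = l then (p:ℝ)/4 else 0 := by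
  have hp0 : p ≠ 0 := by omega
  set a : ℤ := (k:ℕ) + 1 with ha
  set b : ℤ := (l:ℕ) + 1 with hb
  set F : ℕ → ℝ := fun x =>
    Real.sin (2*Real.pi*((a * x : ℤ) : ℝ)/p) * Real.sin (2*Real.pi*((b * x : ℤ) : ℝ)/p) with hF
  have hk := k.isLt
  have hl := l.isLt
  have hab : ¬ (p:ℤ) ∣ (a + b) := by
    intro h
    have h1 : (0:ℤ) < a + b := by simp [ha, hb]; omega
    have := Int.le_of_dvd h1 h
    omega
  have hfull : ∑ x ∈ Finset.range p, F x = if k = l then (p:ℝ)/2 else 0 := by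
    rw [full_sum p hp0 a b hab]
    congr 1
    simp only [eq_iff_iff]
    constructor
    · intro h
      have h2 : a - b = 0 := by
        refine Int.eq_zero_of_abs_lt_dvd h ?_
        rw [abs_lt]; constructor <;> simp [ha, hb] <;> omega
      have : (k:ℕ) = (l:ℕ) := by omega
      exact Fin.ext this
    · intro h; subst h; simp [ha, hb]
  have hrefl : ∀ m : ℕ, m ≤ p → F (p - m) = F m := by
    intro m hm
    simp only [hF]
    rw [sin_reflect p hp0 a m hm, sin_reflect p hp0 b m hm]
    ring
  have hsplit : ∑ x ∈ Finset.range p, F x = (∑ i ∈ Finset.range N, F (i+1)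
      + ∑ i ∈ Finset.range N, F (N + i + 1)) + F 0 := by
    rw [hpN, show 2*N+1 = N+N+1 by ring, Finset.sum_range_succ' F (N+N),
      Finset.sum_range_add (fun i => F (i+1)) N N]
  have hF0 : F 0 = 0 := by simp [hF]
  have hsecond : ∑ i ∈ Finset.range N, F (N + i + 1) = ∑ i ∈ Finset.range N, F (i+1) := by
    rw [← Finset.sum_range_reflect (fun j => F (N + j + 1)) N]
    apply Finset.sum_congr rfl
    intro j hj
    rw [Finset.mem_range] at hj
    have h1 : N + (N - 1 - j) + 1 = p - (j + 1) := by omega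
    rw [h1, hrefl (j+1) (by omega)]
  have hhalf : ∑ i ∈ Finset.range N, F (i+1) = if k = l then (p:ℝ)/4 else 0 := by
    have := hfull
    rw [hsplit, hF0, hsecond] at this
    by_cases hkl : k = l
    · rw [if_pos hkl] at this ⊢; linarith
    · rw [if_neg hkl] at this ⊢; linarith
  rw [← hhalf, Finset.sum_range fun i => F (i+1)]
  apply Finset.sum_congr rfl
  intro x _
  simp only [hF, ha, hb]
  congr 2 <;> push_cast <;> ring

lemma key (N p : ℕ) (hN : 1 ≤ N) (hpN : p = 2*N+1) (hp : p.Prime) (hmod : p % 4 = 1)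
    (a : Fin N → ℝ) (ha : ∀ i, a i = 1 ∨ a i = -1) (ε : ℝ) (hε : ε = 1 ∨ ε = -1) :
    ∑ x : Fin N, Real.sin (2*Real.pi*((((x:ℕ)+1 : ℕ) : ℝ))/p) * a x ≠ ε * Real.sqrt p / 2 := by
  intro heq
  have hp0 : p ≠ 0 := by omega
  have hp5 : 5 ≤ p := by
    rcases hp.eq_one_or_self_of_dvd 1 ⟨p, (one_mul p).symm⟩ with h | h <;> omega
  haveI : Fact p.Prime := ⟨hp⟩
  haveI : NeZero p := ⟨hp0⟩
  have hprim := zeta_prim p hp0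
  have hζ0 := zeta_ne_zero p
  set K := IntermediateField.adjoin ℚ ({zeta p} : Set ℂ) with hK
  have hζK : zeta p ∈ K := IntermediateField.mem_adjoin_simple_self ℚ (zeta p)
  -- the element T
  set T : ℂ := ∑ x : Fin N, (a x : ℂ) *
      (zeta p ^ (((x:ℕ)+1 : ℕ) : ℤ) - zeta p ^ (-((((x:ℕ)+1 : ℕ)) : ℤ))) with hT
  have hTval : T = 2 * Complex.I * ((ε * Real.sqrt p / 2 : ℝ) : ℂ) := by
    rw [hT]
    have : ∀ x : Fin N, (a x : ℂ) *
        (zeta p ^ (((x:ℕ)+1 : ℕ) : ℤ) - zeta p ^ (-((((x:ℕ)+1 : ℕ)) : ℤ)))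
        = 2 * Complex.I * ((Real.sin (2*Real.pi*((((x:ℕ)+1 : ℕ) : ℝ))/p) * a x : ℝ) : ℂ) := by
      intro x
      have hs := sin_zeta p (((x:ℕ)+1 : ℕ) : ℤ)
      have harg : ((((((x:ℕ)+1 : ℕ)) : ℤ) : ℝ)) = (((x:ℕ)+1 : ℕ) : ℝ) := by push_cast; ring
      rw [harg] at hs
      rw [Complex.ofReal_mul, hs]
      have hI : (2 : ℂ) * Complex.I ≠ 0 := by
        simp [Complex.I_ne_zero]
      field_simp
    rw [Finset.sum_congr rfl (fun x _ => this x), ← Finset.mul_sum, ← Complex.ofReal_sum, heq]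
  have hTsq : T^2 = -(p:ℂ) := by
    rw [hTval]
    have h1 : ((Real.sqrt p : ℝ) : ℂ)^2 = (p:ℂ) := by
      rw [← Complex.ofReal_pow, Real.sq_sqrt (Nat.cast_nonneg p)]; norm_cast
    have h2 : (ε:ℂ)^2 = 1 := by rcases hε with h | h <;> rw [h] <;> norm_num
    have h3 : (2 * Complex.I * ((ε * Real.sqrt p / 2 : ℝ) : ℂ))^2
        = Complex.I^2 * (ε:ℂ)^2 * ((Real.sqrt p : ℝ) : ℂ)^2 := by push_cast; ring
    rw [h3, Complex.I_sq, h2, h1]; ring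
  have hTK : T ∈ K := by
    rw [hT]
    apply sum_mem
    intro x _
    apply mul_mem
    · rcases ha x with h | h <;> rw [h] <;> push_cast
      · exact one_mem K
      · exact neg_mem (one_mem K)
    · apply sub_mem
      · rw [zpow_natCast]
        exact pow_mem hζK _
      · rw [zpow_neg, zpow_natCast]
        exact IntermediateField.inv_mem K (pow_mem hζK _)
  -- Gauss sum
  have hchar : ringChar (ZMod p) ≠ 2 := by
    rw [ZMod.ringChar_zmod_n]; omega
  set χ : MulChar (ZMod p) ℂ :=
    (quadraticChar (ZMod p)).ringHomComp (Int.castRingHom ℂ) with hχ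
  have hζp : zeta p ^ p = 1 := hprim.pow_eq_one
  set ψ : AddChar (ZMod p) ℂ := AddChar.zmodChar p hζp with hψdef
  have hψ : ψ.IsPrimitive := AddChar.zmodChar_primitive_of_primitive_root p hprim
  have hχ1 : χ ≠ 1 :=
    (MulChar.ringHomComp_ne_one_iff Int.cast_injective).mpr (quadraticChar_ne_one hchar)
  have hχq : χ.IsQuadratic := (quadraticChar_isQuadratic (ZMod p)).comp _
  set g : ℂ := gaussSum χ ψ with hg
  have hg2 : g^2 = (p:ℂ) := by
    rw [hg, gaussSum_sq hχ1 hχq hψ]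
    have hm1 : χ (-1) = 1 := by
      rw [hχ]
      have : quadraticChar (ZMod p) (-1) = 1 := by
        rw [quadraticChar_neg_one hchar, ZMod.card]
        exact ZMod.χ₄_nat_one_mod_four hmod
      rw [MulChar.ringHomComp_apply, this]
      norm_num
    rw [hm1, ZMod.card, one_mul]
  have hgK : g ∈ K := by
    rw [hg, gaussSum]
    apply sum_mem
    intro t _
    apply mul_mem
    · rw [hχ]
      exact intCast_mem K _
    · rw [hψdef, AddChar.zmodChar_apply]
      exact pow_mem hζK _
  have hp0' : (p : ℂ) ≠ 0 := by exact_mod_cast hp0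
  have hgne : g ≠ 0 := by
    intro h
    rw [h] at hg2
    simp at hg2
    exact hp0' hg2.symm
  -- the element i0 with square -1
  set i0 : ℂ := T * g * (p:ℂ)⁻¹ with hi0
  have hi0K : i0 ∈ K := mul_mem (mul_mem hTK hgK)
    (IntermediateField.inv_mem K (natCast_mem K p))
  have hi0sq : i0^2 = -1 := by
    rw [hi0]
    field_simp
    rw [hTsq, hg2]
    ring
  have hIK : Complex.I ∈ K := by
    have hfac : (i0 - Complex.I) * (i0 + Complex.I) = 0 := by
      have : i0^2 - Complex.I^2 = 0 := by rw [hi0sq, Complex.I_sq]; ring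
      calc (i0 - Complex.I) * (i0 + Complex.I) = i0^2 - Complex.I^2 := by ring
        _ = 0 := this
    rcases mul_eq_zero.mp hfac with h | h
    · rw [show Complex.I = i0 from (sub_eq_zero.mp h).symm]
      exact hi0K
    · rw [show Complex.I = -i0 from by linear_combination h]
      exact neg_mem hi0K
  -- primitive 4p-th root of unity in K
  have hcop : Nat.Coprime (p+4) (4*p) := by
    apply Nat.Coprime.mul_right
    · have h2 : Nat.Coprime (p+4) 2 :=
        ((Nat.Prime.coprime_iff_not_dvd Nat.prime_two).mpr (by omega)).symm
      have := Nat.Coprime.pow_right 2 h2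
      simpa using this
    · refine ((Nat.Prime.coprime_iff_not_dvd hp).mpr ?_).symm
      intro hdvd
      have h4 : p ∣ 4 := (Nat.dvd_add_right (dvd_refl p)).mp hdvd
      have := Nat.le_of_dvd (by norm_num) h4
      omega
  have h4p0 : (4*p) ≠ 0 := by omega
  have hz : IsPrimitiveRoot (Complex.exp (2 * Real.pi * Complex.I * ((p+4 : ℕ) / ((4*p : ℕ) : ℂ)))) (4*p) :=
    Complex.isPrimitiveRoot_exp_of_coprime (p+4) (4*p) h4p0 hcop
  set z : ℂ := Complex.exp (2 * Real.pi * Complex.I * ((p+4 : ℕ) / ((4*p : ℕ) : ℂ))) with hzdef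
  have hzI : z = Complex.I * zeta p := by
    rw [hzdef, zeta]
    have hsplit : 2 * Real.pi * Complex.I * ((p+4 : ℕ) / ((4*p : ℕ) : ℂ))
        = ((Real.pi/2 : ℝ) : ℂ) * Complex.I + 2 * Real.pi * Complex.I / p := by
      have : ((4*p : ℕ) : ℂ) ≠ 0 := by exact_mod_cast h4p0
      field_simp
      push_cast
      ring
    rw [hsplit, Complex.exp_add]
    congr 1
    rw [Complex.exp_mul_I, ← Complex.ofReal_cos, ← Complex.ofReal_sin,
      Real.cos_pi_div_two, Real.sin_pi_div_two]
    simp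
  have hzK : z ∈ K := by rw [hzI]; exact mul_mem hIK hζK
  -- degree contradiction
  have hint : IsIntegral ℚ (zeta p) := (hprim.isIntegral hp.pos).tower_top
  haveI : FiniteDimensional ℚ K := IntermediateField.adjoin.finiteDimensional hint
  have hrank : Module.finrank ℚ K = p.totient := by
    rw [hK, IntermediateField.adjoin.finrank hint,
      ← Polynomial.cyclotomic_eq_minpoly_rat hprim hp.pos, Polynomial.natDegree_cyclotomic]
  have hminz : minpoly ℚ z = Polynomial.cyclotomic (4*p) ℚ :=
    (Polynomial.cyclotomic_eq_minpoly_rat hz (by omega)).symm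
  set xel : K := ⟨z, hzK⟩ with hxel
  have halg : algebraMap K ℂ xel = z := rfl
  have hminx : minpoly ℚ xel = Polynomial.cyclotomic (4*p) ℚ := by
    rw [← minpoly.algebraMap_eq (algebraMap K ℂ).injective xel, halg, hminz]
  have hle := minpoly.natDegree_le (A := ℚ) xel
  rw [hminx, Polynomial.natDegree_cyclotomic, hrank] at hle
  have hcop4p : Nat.Coprime 4 p := by
    refine ((Nat.Prime.coprime_iff_not_dvd hp).mpr ?_).symm
    intro h4
    have := Nat.le_of_dvd (by norm_num) h4
    omega
  rw [Nat.totient_mul hcop4p] at hle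
  have h4tot : Nat.totient 4 = 2 := by decide
  rw [h4tot] at hle
  have htp : p.totient = p - 1 := Nat.totient_prime hp
  rw [htp] at hle
  omega


theorem stmt_14 (N p : ℕ) (hN : 1 ≤ N) (hpN : p = 2 * N + 1)
    (hp : p.Prime) (hmod : p % 4 = 1)
    (J : Matrix (Fin N) (Fin N) ℝ)
    (hJ : ∀ k x : Fin N, J k x =
      (2 / Real.sqrt p) * Real.sin (2 * Real.pi * ((k : ℕ) + 1) * ((x : ℕ) + 1) / p)) :
    (∀ v : Fin N → ℝ, (∀ i, v i = 1 ∨ v i = -1) →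
        J.mulVec v ≠ v ∧ J.mulVec v ≠ -v) ∧
    (∀ σ : Fin N → ℝ, (∀ i, σ i = 1 ∨ σ i = -1) →
        -(1 / 2) * (∑ i : Fin N, ∑ j : Fin N, J i j * σ i * σ j) > -(N : ℝ) / 2) := by
  have hp5 : 5 ≤ p := by
    have h2 := hp.two_le
    rcases Nat.lt_or_ge p 5 with h | h
    · interval_cases p <;> simp_all <;> omega
    · exact h
  have hppos : (0:ℝ) < p := by positivity
  have hsqrtpos : (0:ℝ) < Real.sqrt p := Real.sqrt_pos.mpr hppos
  have hsqrt : Real.sqrt p * Real.sqrt p = (p:ℝ) := Real.mul_self_sqrt (le_of_lt hppos)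
  have partA : ∀ v : Fin N → ℝ, (∀ i, v i = 1 ∨ v i = -1) →
      J.mulVec v ≠ v ∧ J.mulVec v ≠ -v := by
    intro v hv
    set k0 : Fin N := ⟨0, hN⟩ with hk0
    have hrow : ∀ x : Fin N, J k0 x
        = (2/Real.sqrt p) * Real.sin (2*Real.pi*((((x:ℕ)+1 : ℕ)) : ℝ)/p) := by
      intro x
      have harg : 2*Real.pi*(((k0:ℕ):ℝ)+1)*(((x:ℕ):ℝ)+1)/p
          = 2*Real.pi*((((x:ℕ)+1 : ℕ)) : ℝ)/p := by
        push_cast [show ((k0:ℕ)) = 0 from rfl]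
        ring
      rw [hJ k0 x, harg]
    have hmv : (J.mulVec v) k0 = (2/Real.sqrt p) * ∑ x : Fin N,
        Real.sin (2*Real.pi*((((x:ℕ)+1 : ℕ)) : ℝ)/p) * v x := by
      simp only [Matrix.mulVec, dotProduct]
      rw [Finset.mul_sum]
      exact Finset.sum_congr rfl (fun x _ => by rw [hrow x]; ring)
    have hS : ∀ c : ℝ, (c = 1 ∨ c = -1) → (J.mulVec v) k0 ≠ c := by
      intro c hc hEq
      rw [hmv] at hEq
      have hS2 : ∑ x : Fin N, Real.sin (2*Real.pi*((((x:ℕ)+1 : ℕ)) : ℝ)/p) * v x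
          = c * Real.sqrt p / 2 := by
        field_simp at hEq
        push_cast at hEq ⊢
        rw [eq_div_iff (by norm_num : (2:ℝ) ≠ 0)]
        linarith
      exact key N p hN hpN hp hmod v hv c hc hS2
    constructor
    · intro h
      exact hS (v k0) (hv k0) (by rw [h])
    · intro h
      have hval : (J.mulVec v) k0 = -(v k0) := by rw [h]; simp
      rcases hv k0 with h1 | h1
      · exact hS (-1) (Or.inr rfl) (by rw [hval, h1])
      · exact hS 1 (Or.inl rfl) (by rw [hval, h1]; norm_num)
  refine ⟨partA, ?_⟩
  intro σ hσ
  have hAneq : J.mulVec σ ≠ σ := (partA σ hσ).1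
  set w := J.mulVec σ with hw
  have hwx : ∀ i, w i = ∑ x : Fin N, J i x * σ x := by
    intro i; simp [hw, Matrix.mulVec, dotProduct]
  have hinner : ∀ x y : Fin N, ∑ i : Fin N, J i x * J i y = if x = y then (1:ℝ) else 0 := by
    intro x y
    have horth := orth N p hN hpN x y
    have hterm : ∀ i : Fin N, J i x * J i y = (4/(p:ℝ)) *
        (Real.sin (2*Real.pi*(((x:ℕ):ℝ)+1)*(((i:ℕ):ℝ)+1)/p) *
          Real.sin (2*Real.pi*(((y:ℕ):ℝ)+1)*(((i:ℕ):ℝ)+1)/p)) := by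
      intro i
      have e1 : 2*Real.pi*(((i:ℕ):ℝ)+1)*(((x:ℕ):ℝ)+1)/p
          = 2*Real.pi*(((x:ℕ):ℝ)+1)*(((i:ℕ):ℝ)+1)/p := by ring
      have e2 : 2*Real.pi*(((i:ℕ):ℝ)+1)*(((y:ℕ):ℝ)+1)/p
          = 2*Real.pi*(((y:ℕ):ℝ)+1)*(((i:ℕ):ℝ)+1)/p := by ring
      rw [hJ i x, hJ i y, e1, e2]
      have h4 : (2/Real.sqrt p) * (2/Real.sqrt p) = 4/(p:ℝ) := by
        rw [div_mul_div_comm, hsqrt]; norm_num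
      calc (2/Real.sqrt p) * Real.sin (2*Real.pi*(((x:ℕ):ℝ)+1)*(((i:ℕ):ℝ)+1)/p) *
            ((2/Real.sqrt p) * Real.sin (2*Real.pi*(((y:ℕ):ℝ)+1)*(((i:ℕ):ℝ)+1)/p))
          = ((2/Real.sqrt p) * (2/Real.sqrt p)) *
            (Real.sin (2*Real.pi*(((x:ℕ):ℝ)+1)*(((i:ℕ):ℝ)+1)/p) *
             Real.sin (2*Real.pi*(((y:ℕ):ℝ)+1)*(((i:ℕ):ℝ)+1)/p)) := by ring
        _ = _ := by rw [h4]
    rw [Finset.sum_congr rfl (fun i _ => hterm i), ← Finset.mul_sum, horth]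
    by_cases hxy : x = y
    · rw [if_pos hxy, if_pos hxy]
      field_simp
    · rw [if_neg hxy, if_neg hxy, mul_zero]
  have hwsq : ∑ i : Fin N, w i^2 = (N:ℝ) := by
    have step1 : ∀ i : Fin N, w i ^2
        = ∑ x : Fin N, ∑ y : Fin N, (J i x * σ x) * (J i y * σ y) := by
      intro i; rw [sq, hwx i, Finset.sum_mul_sum]
    rw [Finset.sum_congr rfl (fun i _ => step1 i), Finset.sum_comm]
    have step2 : ∀ x : Fin N, (∑ i : Fin N, ∑ y : Fin N, (J i x * σ x) * (J i y * σ y))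
        = ∑ y : Fin N, (σ x * σ y) * ∑ i : Fin N, J i x * J i y := by
      intro x
      rw [Finset.sum_comm]
      refine Finset.sum_congr rfl (fun y _ => ?_)
      rw [Finset.mul_sum]
      exact Finset.sum_congr rfl (fun i _ => by ring)
    rw [Finset.sum_congr rfl (fun x _ => step2 x)]
    have step3 : ∀ x : Fin N, (∑ y : Fin N, (σ x * σ y) * ∑ i : Fin N, J i x * J i y) = 1 := by
      intro x
      have : ∀ y : Fin N, (σ x * σ y) * (∑ i : Fin N, J i x * J i y)
          = if x = y then σ x * σ y else 0 := by
        intro y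
        rw [hinner x y]
        by_cases hxy : x = y
        · rw [if_pos hxy, if_pos hxy, mul_one]
        · rw [if_neg hxy, if_neg hxy, mul_zero]
      rw [Finset.sum_congr rfl (fun y _ => this y), Finset.sum_ite_eq]
      rcases hσ x with h | h <;> simp [h]
    rw [Finset.sum_congr rfl (fun x _ => step3 x)]
    simp
  have hQ : ∑ i : Fin N, ∑ j : Fin N, J i j * σ i * σ j = ∑ i : Fin N, σ i * w i := by
    refine Finset.sum_congr rfl (fun i _ => ?_)
    rw [hwx i, Finset.mul_sum]
    exact Finset.sum_congr rfl (fun j _ => by ring)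
  have hσsq : ∑ i : Fin N, σ i ^2 = (N:ℝ) := by
    have h1 : ∀ i : Fin N, σ i^2 = (1:ℝ) := fun i => by
      rcases hσ i with h|h <;> rw [h] <;> norm_num
    rw [Finset.sum_congr rfl (fun i _ => h1 i)]
    simp
  have hne : ∃ i, w i ≠ σ i := by
    by_contra hco
    push_neg at hco
    exact hAneq (funext hco)
  obtain ⟨i0, hi0⟩ := hne
  have hpos : 0 < ∑ i : Fin N, (w i - σ i)^2 := by
    apply Finset.sum_pos' (fun i _ => sq_nonneg _)
    exact ⟨i0, Finset.mem_univ _, sq_pos_of_ne_zero (sub_ne_zero.mpr hi0)⟩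
  have hexpand : ∑ i : Fin N, (w i - σ i)^2
      = ∑ i : Fin N, w i^2 - 2*(∑ i : Fin N, σ i * w i) + ∑ i : Fin N, σ i^2 := by
    have h1 : ∀ i : Fin N, (w i - σ i)^2 = w i^2 - 2*(σ i * w i) + σ i^2 := fun i => by ring
    rw [Finset.sum_congr rfl (fun i _ => h1 i), Finset.sum_add_distrib,
      Finset.sum_sub_distrib, ← Finset.mul_sum]
  rw [hexpand, hwsq, hσsq] at hpos
  rw [hQ]
  linarith
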